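/- Let S be a finite measure space and n ≥ 1. The Nemytskij operator Q : L²(S; ℝ₊*) × L²(S; ℝⁿ) → L²(S; ℝⁿ), defined by Q(α, z)(x) = q(α(x), z(x)) where q(a, w) is the projection of w onto the ball B(0, a) in ℝⁿ, is directionally differentiable: for every (α, z) in its domain and every direction (β, h) ∈ L²(S) × L²(S; ℝⁿ), the difference quotients (Q(α + tβ, z + th) − Q(α, z))/t converge strongly in L²(S; ℝⁿ) as t → 0⁺ to the function x ↦ dq((α(x), z(x)); (β(x), h(x))), where dq is the pointwise directional derivative of q. -/

import Mathlib

open Filter Topology MeasureTheory RealInnerProductSpace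

/-- The Euclidean projection of `w ∈ ℝⁿ` onto the closed ball `B(0, a)`. -/
noncomputable def ballProj {n : ℕ} (a : ℝ) (w : EuclideanSpace ℝ (Fin n)) :
    EuclideanSpace ℝ (Fin n) :=
  if ‖w‖ ≤ a then w else (a / ‖w‖) • w

/-- The pointwise directional derivative of the ball projection at `(a, w)` in the
direction `(b, k)`. -/
noncomputable def ballProjDeriv {n : ℕ} (a : ℝ) (w : EuclideanSpace ℝ (Fin n)) (b : ℝ)
    (k : EuclideanSpace ℝ (Fin n)) : EuclideanSpace ℝ (Fin n) :=
  if ‖w‖ < a then k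
  else if ‖w‖ = a then
    k - (max 0 ((inner ℝ k (‖w‖⁻¹ • w) : ℝ) - b)) • (‖w‖⁻¹ • w)
  else (a / ‖w‖) • (k - ((‖w‖ ^ 2)⁻¹ * (inner ℝ w k : ℝ)) • w) + (b / ‖w‖) • w


section Aux
variable {n : ℕ}
local notation "E" => EuclideanSpace ℝ (Fin n)

lemma norm_le_of_sq_le_sq {x y : E} (h : ‖x‖^2 ≤ ‖y‖^2) : ‖x‖ ≤ ‖y‖ := by
  nlinarith [norm_nonneg x, norm_nonneg y]

lemma norm_smul_sub_sq (r : ℝ) (x y : E) :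
    ‖x - r • y‖^2 = ‖x‖^2 - 2*r*⟪x,y⟫ + r^2*‖y‖^2 := by
  rw [norm_sub_sq_real, real_inner_smul_right, norm_smul, Real.norm_eq_abs, mul_pow, sq_abs]
  ring

lemma norm_smul_sub_smul_sq (r t : ℝ) (x y : E) :
    ‖r • x - t • y‖^2 = r^2*‖x‖^2 - 2*r*t*⟪x,y⟫ + t^2*‖y‖^2 := by
  rw [norm_sub_sq_real, real_inner_smul_right, real_inner_smul_left, norm_smul, norm_smul,
    Real.norm_eq_abs, Real.norm_eq_abs, mul_pow, mul_pow, sq_abs, sq_abs]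
  ring

-- Lipschitz in w
lemma ballProj_lip_w (c : ℝ) (hc : 0 < c) (u v : E) :
    ‖ballProj c u - ballProj c v‖ ≤ ‖u - v‖ := by
  have key : ∀ x y : E, ‖x‖ ≤ c → ¬ ‖y‖ ≤ c → ‖x - (c/‖y‖) • y‖ ≤ ‖x - y‖ := by
    intro x y hx hy
    push_neg at hy
    have hy0 : 0 < ‖y‖ := hc.trans hy
    set r : ℝ := c/‖y‖ with hrdef
    have hr0 : 0 ≤ r := by positivity
    have hr1 : r ≤ 1 := by rw [hrdef, div_le_one hy0]; exact hy.le
    have hrc : r * ‖y‖ = c := by rw [hrdef]; field_simp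
    have h1 : (⟪x, y⟫) ≤ ‖x‖ * ‖y‖ := real_inner_le_norm x y
    have hs2 : (⟪x, y⟫) ≤ r * ‖y‖ * ‖y‖ := by nlinarith [norm_nonneg y]
    apply norm_le_of_sq_le_sq
    rw [norm_smul_sub_sq, norm_sub_sq_real]
    nlinarith [mul_nonneg (sub_nonneg.2 hr1) (sub_nonneg.2 hs2),
      mul_nonneg (mul_nonneg (sub_nonneg.2 hr1) (sub_nonneg.2 hr1)) (sq_nonneg ‖y‖)]
  unfold ballProj
  by_cases hu : ‖u‖ ≤ c <;> by_cases hv : ‖v‖ ≤ c <;>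
    simp only [hu, hv, if_true, if_false]
  · exact le_refl _
  · exact key u v hu hv
  · rw [norm_sub_rev, norm_sub_rev u v]; exact key v u hv hu
  · push_neg at hu hv
    have hu0 : 0 < ‖u‖ := hc.trans hu
    have hv0 : 0 < ‖v‖ := hc.trans hv
    apply norm_le_of_sq_le_sq
    set r : ℝ := c/‖u‖ with hrdef
    set t : ℝ := c/‖v‖ with htdef
    have hr0 : 0 ≤ r := by positivity
    have hr1 : r ≤ 1 := by rw [hrdef, div_le_one hu0]; exact hu.le
    have ht0 : 0 ≤ t := by positivity
    have ht1 : t ≤ 1 := by rw [htdef, div_le_one hv0]; exact hv.le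
    have hrc : r * ‖u‖ = c := by rw [hrdef]; field_simp
    have htc : t * ‖v‖ = c := by rw [htdef]; field_simp
    have hcc : c^2 = r*t*(‖u‖*‖v‖) := by rw [hrdef, htdef]; field_simp
    have h1 : (⟪u, v⟫) ≤ ‖u‖ * ‖v‖ := real_inner_le_norm u v
    rw [norm_smul_sub_smul_sq, norm_sub_sq_real]
    have hrt : r * t ≤ 1 := by nlinarith
    nlinarith [mul_nonneg (sub_nonneg.2 hrt) (sub_nonneg.2 h1), sq_nonneg (‖u‖ - ‖v‖)]

-- Lipschitz in the radius (both radii positive)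
lemma ballProj_lip_a {c a : ℝ} (hc : 0 < c) (ha : 0 < a) (w : E) :
    ‖ballProj c w - ballProj a w‖ ≤ |c - a| := by
  have key : ∀ c a : ℝ, 0 < c → 0 < a → c ≤ a →
      ‖ballProj c w - ballProj a w‖ ≤ |c - a| := by
    intro c a hc ha hca
    unfold ballProj
    by_cases h1 : ‖w‖ ≤ c
    · rw [if_pos h1, if_pos (h1.trans hca), sub_self, norm_zero]
      positivity
    · push_neg at h1
      have hw0 : 0 < ‖w‖ := hc.trans h1
      rw [if_neg (not_le.2 h1)]
      by_cases h2 : ‖w‖ ≤ a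
      · rw [if_pos h2]
        have : (c / ‖w‖) • w - w = ((c - ‖w‖)/‖w‖) • w := by
          rw [sub_div, div_self hw0.ne', sub_smul, one_smul]
        rw [this, norm_smul, Real.norm_eq_abs, abs_div, abs_of_pos hw0,
          div_mul_cancel₀ _ hw0.ne']
        rw [abs_of_neg (by linarith), abs_of_nonpos (by linarith)]
        linarith
      · push_neg at h2
        rw [if_neg (not_le.2 h2), ← sub_smul, norm_smul, Real.norm_eq_abs, ← sub_div, abs_div,
          abs_of_pos hw0, div_mul_cancel₀ _ hw0.ne', abs_sub_comm]
  rcases le_total c a with hca | hca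
  · exact key c a hc ha hca
  · rw [norm_sub_rev, abs_sub_comm]; exact key a c ha hc hca

lemma ballProj_norm_le {c : ℝ} (w : E) : ‖ballProj c w‖ ≤ |c| + ‖w‖ := by
  unfold ballProj
  split_ifs with h
  · linarith [abs_nonneg c]
  · rcases eq_or_ne w 0 with rfl | hw
    · simp
    · have hw0 : 0 < ‖w‖ := norm_pos_iff.2 hw
      rw [norm_smul, Real.norm_eq_abs, abs_div, abs_of_pos hw0, div_mul_cancel₀ _ hw0.ne']
      linarith [norm_nonneg w]

lemma ballProj_norm_le' {c : ℝ} (hc : c ≤ 0) (w : E) : ‖ballProj c w‖ ≤ |c| := by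
  unfold ballProj
  split_ifs with h
  · rw [abs_of_nonpos hc]; linarith [norm_nonneg w]
  · rcases eq_or_ne w 0 with rfl | hw
    · simp
    · have hw0 : 0 < ‖w‖ := norm_pos_iff.2 hw
      rw [norm_smul, Real.norm_eq_abs, abs_div, abs_of_pos hw0, div_mul_cancel₀ _ hw0.ne']

lemma ballProj_norm_le'' {c : ℝ} (hc : 0 ≤ c) (w : E) : ‖ballProj c w‖ ≤ c := by
  unfold ballProj
  split_ifs with h
  · exact h
  · rcases eq_or_ne w 0 with rfl | hw
    · simpa
    · have hw0 : 0 < ‖w‖ := norm_pos_iff.2 hw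
      rw [norm_smul, Real.norm_eq_abs, abs_div, abs_of_pos hw0, div_mul_cancel₀ _ hw0.ne',
        abs_of_nonneg hc]

-- bound on the derivative
lemma ballProjDeriv_norm_le {a : ℝ} (ha : 0 < a) (w : E) (b : ℝ) (k : E) :
    ‖ballProjDeriv a w b k‖ ≤ 2*(|b| + ‖k‖) := by
  unfold ballProjDeriv
  split_ifs with h1 h2
  · have := abs_nonneg b; have := norm_nonneg k; linarith
  · have hw0 : 0 < ‖w‖ := h2 ▸ ha
    have hunit : ‖(‖w‖⁻¹ • w : E)‖ = 1 := by
      rw [norm_smul, Real.norm_eq_abs, abs_of_pos (by positivity), inv_mul_cancel₀ hw0.ne']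
    have hin : |(⟪k, ‖w‖⁻¹ • w⟫ : ℝ)| ≤ ‖k‖ := by
      calc |(⟪k, ‖w‖⁻¹ • w⟫ : ℝ)| ≤ ‖k‖ * ‖(‖w‖⁻¹ • w : E)‖ := abs_real_inner_le_norm _ _
        _ = ‖k‖ := by rw [hunit, mul_one]
    have hmax : |max 0 ((⟪k, ‖w‖⁻¹ • w⟫ : ℝ) - b)| ≤ ‖k‖ + |b| := by
      rw [abs_of_nonneg (le_max_left _ _)]
      refine max_le (by positivity) ?_
      calc (⟪k, ‖w‖⁻¹ • w⟫ : ℝ) - b ≤ |(⟪k, ‖w‖⁻¹ • w⟫ : ℝ)| + |b| := by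
            have := le_abs_self (⟪k, ‖w‖⁻¹ • w⟫ : ℝ); have := neg_abs_le b; linarith
        _ ≤ ‖k‖ + |b| := by linarith
    calc ‖k - (max 0 ((⟪k, ‖w‖⁻¹ • w⟫ : ℝ) - b)) • (‖w‖⁻¹ • w)‖
        ≤ ‖k‖ + ‖(max 0 ((⟪k, ‖w‖⁻¹ • w⟫ : ℝ) - b)) • (‖w‖⁻¹ • w)‖ := norm_sub_le _ _
      _ = ‖k‖ + |max 0 ((⟪k, ‖w‖⁻¹ • w⟫ : ℝ) - b)| * 1 := by
          rw [norm_smul, Real.norm_eq_abs, hunit]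
      _ ≤ ‖k‖ + (‖k‖ + |b|) := by rw [mul_one]; linarith
      _ ≤ 2*(|b| + ‖k‖) := by linarith [abs_nonneg b]
  · push_neg at h1 h2
    have hwa : a < ‖w‖ := lt_of_le_of_ne h1 (Ne.symm h2)
    have hw0 : 0 < ‖w‖ := ha.trans hwa
    have hin : |(⟪w, k⟫ : ℝ)| ≤ ‖w‖ * ‖k‖ := abs_real_inner_le_norm _ _
    have h3 : ‖k - ((‖w‖ ^ 2)⁻¹ * (⟪w, k⟫ : ℝ)) • w‖ ≤ 2*‖k‖ := by
      calc ‖k - ((‖w‖ ^ 2)⁻¹ * (⟪w, k⟫ : ℝ)) • w‖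
          ≤ ‖k‖ + ‖((‖w‖ ^ 2)⁻¹ * (⟪w, k⟫ : ℝ)) • w‖ := norm_sub_le _ _
        _ = ‖k‖ + |(‖w‖ ^ 2)⁻¹ * (⟪w, k⟫ : ℝ)| * ‖w‖ := by rw [norm_smul, Real.norm_eq_abs]
        _ ≤ ‖k‖ + ((‖w‖^2)⁻¹ * (‖w‖ * ‖k‖)) * ‖w‖ := by
            gcongr
            rw [abs_mul, abs_of_pos (by positivity : (0:ℝ) < (‖w‖^2)⁻¹)]
            gcongr
        _ = ‖k‖ + ‖k‖ := by field_simp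
        _ = 2*‖k‖ := by ring
    calc ‖(a / ‖w‖) • (k - ((‖w‖ ^ 2)⁻¹ * (⟪w, k⟫ : ℝ)) • w) + (b / ‖w‖) • w‖
        ≤ ‖(a / ‖w‖) • (k - ((‖w‖ ^ 2)⁻¹ * (⟪w, k⟫ : ℝ)) • w)‖ + ‖(b / ‖w‖) • w‖ :=
          norm_add_le _ _
      _ = |a / ‖w‖| * ‖k - ((‖w‖ ^ 2)⁻¹ * (⟪w, k⟫ : ℝ)) • w‖ + |b/‖w‖| * ‖w‖ := by
          rw [norm_smul, norm_smul, Real.norm_eq_abs, Real.norm_eq_abs]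
      _ ≤ 1 * (2*‖k‖) + |b| := by
          have ha1 : |a/‖w‖| ≤ 1 := by
            rw [abs_div, abs_of_pos ha, abs_of_pos hw0, div_le_one hw0]; exact hwa.le
          have hb1 : |b/‖w‖| * ‖w‖ = |b| := by
            rw [abs_div, abs_of_pos hw0, div_mul_cancel₀ _ hw0.ne']
          have := mul_le_mul ha1 h3 (norm_nonneg _) zero_le_one
          linarith
      _ ≤ 2*(|b| + ‖k‖) := by linarith [abs_nonneg b]

lemma quot_bound {a t : ℝ} (ha : 0 < a) (ht : 0 < t) (w : E) (b : ℝ) (k : E) :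
    ‖t⁻¹ • (ballProj (a + t*b) (w + t•k) - ballProj a w)‖ ≤ 2*(|b| + ‖k‖) := by
  rw [norm_smul, Real.norm_eq_abs, abs_of_pos (inv_pos.2 ht)]
  rw [inv_mul_le_iff₀ ht]
  rcases le_or_gt (a + t*b) 0 with hc | hc
  · have h1 : ‖ballProj (a + t*b) (w + t•k)‖ ≤ |a + t*b| := ballProj_norm_le' hc _
    have h2 : ‖ballProj a w‖ ≤ a := ballProj_norm_le'' ha.le _
    have h3 : |a + t*b| = -(a + t*b) := abs_of_nonpos hc
    have h4 : t*b < 0 := by nlinarith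
    have h5 : t*|b| = -(t*b) := by
      rw [abs_of_neg (by nlinarith : b < 0)]; ring
    calc ‖ballProj (a + t*b) (w + t•k) - ballProj a w‖
        ≤ |a + t*b| + a := by
          refine (norm_sub_le _ _).trans (by linarith)
      _ ≤ t * (2*(|b| + ‖k‖)) := by nlinarith [norm_nonneg k]
  · calc ‖ballProj (a + t*b) (w + t•k) - ballProj a w‖
        ≤ ‖ballProj (a + t*b) (w + t•k) - ballProj (a + t*b) w‖
          + ‖ballProj (a + t*b) w - ballProj a w‖ := norm_sub_le_norm_sub_add_norm_sub _ _ _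
      _ ≤ ‖(w + t•k) - w‖ + |a + t*b - a| := by
          gcongr
          · exact ballProj_lip_w _ hc _ _
          · exact ballProj_lip_a hc ha _
      _ = t*‖k‖ + t*|b| := by
          rw [add_sub_cancel_left, norm_smul, Real.norm_eq_abs, abs_of_pos ht,
            add_sub_cancel_left, abs_mul, abs_of_pos ht]
      _ ≤ t * (2*(|b| + ‖k‖)) := by nlinarith [norm_nonneg k, abs_nonneg b]

lemma contNu (w k : E) : Continuous (fun t : ℝ => ‖w + t • k‖) := by
  continuity

lemma hasDerivAt_nu (w k : E) (hw : w ≠ 0) :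
    HasDerivAt (fun t : ℝ => ‖w + t • k‖) ((⟪w,k⟫)/‖w‖) 0 := by
  have hw0 : (0:ℝ) < ‖w‖ := norm_pos_iff.2 hw
  have hp : HasDerivAt (fun t : ℝ => ‖w‖^2 + 2*⟪w,k⟫*t + ‖k‖^2*t^2) (2*⟪w,k⟫) 0 := by
    have h1 : HasDerivAt (fun t : ℝ => 2*⟪w,k⟫*t) (2*⟪w,k⟫) 0 := by
      simpa using (hasDerivAt_id (0:ℝ)).const_mul (2*⟪w,k⟫)
    have h2 : HasDerivAt (fun t : ℝ => ‖k‖^2*t^2) 0 0 := by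
      simpa using (hasDerivAt_pow 2 (0:ℝ)).const_mul (‖k‖^2)
    have := (h1.add h2).const_add (‖w‖^2)
    simpa [add_assoc] using this
  have heq : ∀ t : ℝ, ‖w + t • k‖ = Real.sqrt (‖w‖^2 + 2*⟪w,k⟫*t + ‖k‖^2*t^2) := by
    intro t
    rw [norm_eq_sqrt_real_inner]
    congr 1
    rw [real_inner_add_add_self, real_inner_smul_right, real_inner_smul_left,
      real_inner_smul_right, real_inner_self_eq_norm_sq, real_inner_self_eq_norm_sq]
    ring
  have hne : (‖w‖^2 + 2*⟪w,k⟫*0 + ‖k‖^2*0^2) ≠ 0 := by simpa using (by positivity : ‖w‖^2 > 0).ne'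
  simp only [heq]
  convert hp.sqrt hne using 1
  have hs : Real.sqrt (‖w‖^2 + 2*⟪w,k⟫*0 + ‖k‖^2*0^2) = ‖w‖ := by
    simpa using Real.sqrt_sq (norm_nonneg w)
  rw [hs]
  field_simp

lemma ptwise {a : ℝ} (ha : 0 < a) (w : E) (b : ℝ) (k : E) :
    Tendsto (fun t : ℝ => t⁻¹ • (ballProj (a + t*b) (w + t•k) - ballProj a w)) (𝓝[>](0:ℝ))
      (𝓝 (ballProjDeriv a w b k)) := by
  have hνcont : Tendsto (fun t : ℝ => ‖w + t • k‖) (𝓝 0) (𝓝 ‖w‖) := by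
    simpa using (contNu w k).tendsto 0
  have hccont : Tendsto (fun t : ℝ => a + t*b) (𝓝 (0:ℝ)) (𝓝 a) := by
    have : Continuous (fun t : ℝ => a + t*b) := by continuity
    simpa using this.tendsto 0
  rcases lt_trichotomy ‖w‖ a with hwa | hwa | hwa
  · -- interior case
    rw [ballProjDeriv, if_pos hwa]
    have hev : ∀ᶠ t in 𝓝[>](0:ℝ),
        t⁻¹ • (ballProj (a + t*b) (w + t•k) - ballProj a w) = k := by
      have h1 : ∀ᶠ t in 𝓝 (0:ℝ), ‖w + t • k‖ < a + t*b := hνcont.eventually_lt hccont hwa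
      filter_upwards [nhdsWithin_le_nhds h1, self_mem_nhdsWithin] with t h1 ht
      rw [ballProj, if_pos h1.le, ballProj, if_pos hwa.le, add_sub_cancel_left, smul_smul,
        inv_mul_cancel₀ (ne_of_gt ht), one_smul]
    exact tendsto_const_nhds.congr' (by filter_upwards [hev] with t h using h.symm)
  · -- boundary case
    have hw : w ≠ 0 := by intro h; rw [h, norm_zero] at hwa; exact ha.ne' hwa.symm
    have hw0 : (0:ℝ) < ‖w‖ := norm_pos_iff.2 hw
    set D : ℝ := (⟪w,k⟫)/‖w‖ with hD
    have hslope : Tendsto (fun t : ℝ => (‖w + t•k‖ - (a + t*b))/t) (𝓝[>](0:ℝ))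
        (𝓝 (D - b)) := by
      have h1 := hasDerivAt_iff_tendsto_slope.1 (hasDerivAt_nu w k hw)
      have h2 : Tendsto (fun t : ℝ => (‖w + t•k‖ - (a + t*b))/t) (𝓝[≠](0:ℝ)) (𝓝 (D - b)) := by
        have h3 := h1.sub (tendsto_const_nhds (x := b))
        apply h3.congr'
        filter_upwards [self_mem_nhdsWithin] with t ht
        have ht0 : t ≠ 0 := ht
        rw [slope_def_field]
        field_simp
        rw [zero_smul, add_zero, hwa]
        ring
      exact h2.mono_left (nhdsWithin_mono _ (fun t ht => ne_of_gt ht))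
    have hlim : Tendsto (fun t : ℝ =>
        k - ((max 0 ((‖w + t•k‖ - (a + t*b))/t)) / ‖w + t•k‖) • (w + t•k)) (𝓝[>](0:ℝ))
        (𝓝 (k - ((max 0 (D - b))/‖w‖) • w)) := by
      apply Tendsto.sub tendsto_const_nhds
      apply Tendsto.smul
      · exact Tendsto.div (tendsto_const_nhds.max hslope)
          (hνcont.mono_left nhdsWithin_le_nhds) hw0.ne'
      · have : Tendsto (fun t : ℝ => w + t • k) (𝓝 0) (𝓝 w) := by
          have : Continuous (fun t : ℝ => w + t • k) := by continuity
          simpa using this.tendsto 0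
        exact this.mono_left nhdsWithin_le_nhds
    have hval : ballProjDeriv a w b k = k - ((max 0 (D - b))/‖w‖) • w := by
      rw [ballProjDeriv, if_neg (lt_irrefl _ ∘ (hwa ▸ ·)), if_pos hwa]
      have : (⟪k, ‖w‖⁻¹ • w⟫ : ℝ) = D := by
        rw [real_inner_smul_right, real_inner_comm, hD]; ring
      rw [this, smul_smul, div_eq_mul_inv]
    rw [hval]
    apply hlim.congr'
    have hν0 : ∀ᶠ t in 𝓝 (0:ℝ), 0 < ‖w + t•k‖ := hνcont.eventually (eventually_gt_nhds hw0)
    filter_upwards [nhdsWithin_le_nhds hν0, self_mem_nhdsWithin] with t hν ht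
    have ht0 : (0:ℝ) < t := ht
    have hPaw : ballProj a w = w := by rw [ballProj, if_pos hwa.le]
    rcases le_or_gt ‖w + t•k‖ (a + t*b) with hle | hlt
    · have hmax : max 0 ((‖w + t•k‖ - (a + t*b))/t) = 0 :=
        max_eq_left (div_nonpos_of_nonpos_of_nonneg (by linarith) ht0.le)
      rw [hmax, zero_div, zero_smul, sub_zero, ballProj, if_pos hle, hPaw,
        add_sub_cancel_left, smul_smul, inv_mul_cancel₀ ht0.ne', one_smul]
    · have hmax : max 0 ((‖w + t•k‖ - (a + t*b))/t) = (‖w + t•k‖ - (a + t*b))/t :=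
        max_eq_right (le_of_lt (div_pos (by linarith) ht0))
      rw [hmax, ballProj, if_neg (not_le.2 hlt), hPaw]
      have hν' : ‖w + t•k‖ ≠ 0 := hν.ne'
      set u : E := w + t•k with hu
      have hw2 : w = u - t•k := by rw [hu]; abel
      rw [hw2]
      match_scalars
      · field_simp; ring
      · field_simp; ring
  · -- exterior case
    have hw0 : (0:ℝ) < ‖w‖ := ha.trans hwa
    have hw : w ≠ 0 := norm_pos_iff.1 hw0
    set D : ℝ := (⟪w,k⟫)/‖w‖ with hD
    have hνd : HasDerivAt (fun t : ℝ => ‖w + t • k‖) D 0 := hasDerivAt_nu w k hw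
    have hcd : HasDerivAt (fun t : ℝ => a + t*b) b 0 := by
      simpa [mul_comm] using ((hasDerivAt_id (0:ℝ)).const_mul b).const_add a
    have hν00 : ‖w + (0:ℝ) • k‖ ≠ 0 := by simpa using hw0.ne'
    have hsd : HasDerivAt (fun t : ℝ => (a + t*b) / ‖w + t • k‖)
        ((b * ‖w + (0:ℝ) • k‖ - (a + 0*b) * D) / (‖w + (0:ℝ) • k‖)^2) 0 := hcd.div hνd hν00
    have hud : HasDerivAt (fun t : ℝ => w + t • k) k 0 := by
      simpa using ((hasDerivAt_id (0:ℝ)).smul_const k).const_add w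
    have hgd := hsd.smul hud
    have hslope := hasDerivAt_iff_tendsto_slope.1 hgd
    have hslope' := hslope.mono_left (nhdsWithin_mono _ (fun t (ht : t ∈ Set.Ioi 0) => ne_of_gt ht))
    have hval : ((a + 0*b) / ‖w + (0:ℝ) • k‖) • k
        + ((b * ‖w + (0:ℝ) • k‖ - (a + 0*b) * D) / (‖w + (0:ℝ) • k‖)^2) • (w + (0:ℝ) • k)
        = ballProjDeriv a w b k := by
      rw [ballProjDeriv, if_neg (not_lt.2 hwa.le), if_neg (ne_of_gt hwa)]
      simp only [zero_smul, add_zero, zero_mul, mul_zero, hD]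
      match_scalars
      · field_simp
      · field_simp
        ring
    rw [← hval]
    apply hslope'.congr'
    have h1 : ∀ᶠ t in 𝓝 (0:ℝ), a + t*b < ‖w + t • k‖ := hccont.eventually_lt hνcont hwa
    filter_upwards [nhdsWithin_le_nhds h1, self_mem_nhdsWithin] with t hlt ht
    have ht0 : (0:ℝ) < t := ht
    rw [slope_def_module]
    simp only [zero_smul, add_zero, sub_zero]
    rw [ballProj, if_neg (not_le.2 hlt), ballProj, if_neg (not_le.2 hwa)]
    norm_num

lemma measurable_ballProj : Measurable (fun p : ℝ × E => ballProj p.1 p.2) := by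
  unfold ballProj
  apply Measurable.ite
  · exact measurableSet_le (measurable_norm.comp measurable_snd) measurable_fst
  · exact measurable_snd
  · exact (measurable_fst.div (measurable_norm.comp measurable_snd)).smul measurable_snd

lemma measurable_ballProjDeriv :
    Measurable (fun p : (ℝ × E) × ℝ × E => ballProjDeriv p.1.1 p.1.2 p.2.1 p.2.2) := by
  unfold ballProjDeriv
  have ma : Measurable (fun p : (ℝ × E) × ℝ × E => p.1.1) := measurable_fst.fst
  have mw : Measurable (fun p : (ℝ × E) × ℝ × E => p.1.2) := measurable_fst.snd
  have mb : Measurable (fun p : (ℝ × E) × ℝ × E => p.2.1) := measurable_snd.fst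
  have mk : Measurable (fun p : (ℝ × E) × ℝ × E => p.2.2) := measurable_snd.snd
  have mnw : Measurable (fun p : (ℝ × E) × ℝ × E => ‖p.1.2‖) := mw.norm
  have mhat : Measurable (fun p : (ℝ × E) × ℝ × E => (‖p.1.2‖⁻¹ • p.1.2 : E)) :=
    mnw.inv.smul mw
  apply Measurable.ite (measurableSet_lt mnw ma) mk
  apply Measurable.ite (measurableSet_eq_fun mnw ma)
  · exact mk.sub ((measurable_const.max ((mk.inner mhat).sub mb)).smul mhat)
  · exact ((ma.div mnw).smul
      (mk.sub (((mnw.pow_const 2).inv.mul (mw.inner mk)).smul mw))).add ((mb.div mnw).smul mw)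

end Aux

/-- Directional differentiability of the Nemytskij operator induced by the ball
projection, on `L²(S; ℝ₊*) × L²(S; ℝⁿ)`: the difference quotients converge strongly in
`L²(S; ℝⁿ)` to the pointwise directional derivative. -/
theorem nemytskij_ballProj_dirDiff
    {S : Type*} [MeasurableSpace S] (μ : Measure S) [IsFiniteMeasure μ]
    (n : ℕ) (hn : 1 ≤ n)
    (α : S → ℝ) (hαpos : ∀ x, 0 < α x) (hα : MemLp α 2 μ)
    (z : S → EuclideanSpace ℝ (Fin n)) (hz : MemLp z 2 μ)
    (β : S → ℝ) (hβ : MemLp β 2 μ)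
    (h : S → EuclideanSpace ℝ (Fin n)) (hh : MemLp h 2 μ) :
    Tendsto
      (fun t : ℝ => eLpNorm
        (fun x => t⁻¹ • (ballProj (α x + t * β x) (z x + t • h x) - ballProj (α x) (z x))
          - ballProjDeriv (α x) (z x) (β x) (h x)) 2 μ)
      (𝓝[>] (0 : ℝ)) (𝓝 0) := by
  set F : ℝ → S → EuclideanSpace ℝ (Fin n) := fun t x =>
    t⁻¹ • (ballProj (α x + t * β x) (z x + t • h x) - ballProj (α x) (z x))
      - ballProjDeriv (α x) (z x) (β x) (h x) with hF
  set g : S → ℝ := fun x => 4*(|β x| + ‖h x‖) with hg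
  have hgmem : MemLp g 2 μ := by
    have h1 : MemLp (fun x => |β x|) 2 μ := by simpa [Real.norm_eq_abs] using hβ.norm
    exact ((h1.add hh.norm).const_mul 4)
  -- a.e. strong measurability of F t
  have hDaem : AEStronglyMeasurable (fun x => ballProjDeriv (α x) (z x) (β x) (h x)) μ := by
    have hp : AEMeasurable (fun x => ((α x, z x), (β x, h x))) μ :=
      ((hα.aestronglyMeasurable.aemeasurable.prodMk hz.aestronglyMeasurable.aemeasurable).prodMk
        (hβ.aestronglyMeasurable.aemeasurable.prodMk hh.aestronglyMeasurable.aemeasurable))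
    exact (measurable_ballProjDeriv.comp_aemeasurable hp).aestronglyMeasurable
  have hAESM : ∀ t : ℝ, AEStronglyMeasurable (F t) μ := by
    intro t
    have hp1 : AEMeasurable (fun x => (α x + t * β x, z x + t • h x)) μ :=
      ((hα.aestronglyMeasurable.aemeasurable.add
          (hβ.aestronglyMeasurable.aemeasurable.const_mul t)).prodMk
        (hz.aestronglyMeasurable.aemeasurable.add
          (hh.aestronglyMeasurable.aemeasurable.const_smul t)))
    have hp2 : AEMeasurable (fun x => (α x, z x)) μ :=
      hα.aestronglyMeasurable.aemeasurable.prodMk hz.aestronglyMeasurable.aemeasurable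
    have h1 : AEStronglyMeasurable
        (fun x => ballProj (α x + t * β x) (z x + t • h x)) μ :=
      (measurable_ballProj.comp_aemeasurable hp1).aestronglyMeasurable
    have h2 : AEStronglyMeasurable (fun x => ballProj (α x) (z x)) μ :=
      (measurable_ballProj.comp_aemeasurable hp2).aestronglyMeasurable
    exact (((h1.sub h2).const_smul t⁻¹).sub hDaem)
  -- pointwise bound
  have hbound : ∀ t : ℝ, 0 < t → ∀ x, ‖F t x‖ ≤ g x := by
    intro t ht x
    have h1 := quot_bound (hαpos x) ht (z x) (β x) (h x)
    have h2 := ballProjDeriv_norm_le (hαpos x) (z x) (β x) (h x)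
    calc ‖F t x‖ ≤ ‖t⁻¹ • (ballProj (α x + t * β x) (z x + t • h x) - ballProj (α x) (z x))‖
        + ‖ballProjDeriv (α x) (z x) (β x) (h x)‖ := norm_sub_le _ _
      _ ≤ g x := by rw [hg]; dsimp only; linarith
  -- pointwise limit
  have hlim : ∀ x, Tendsto (fun t => F t x) (𝓝[>](0:ℝ)) (𝓝 0) := by
    intro x
    have := (ptwise (hαpos x) (z x) (β x) (h x)).sub
      (tendsto_const_nhds (x := ballProjDeriv (α x) (z x) (β x) (h x)))
    simpa using this
  -- integral convergence
  have hI : Tendsto (fun t => ∫ x, ‖F t x‖^(2:ℝ) ∂μ) (𝓝[>](0:ℝ)) (𝓝 0) := by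
    have main := tendsto_integral_filter_of_dominated_convergence (μ := μ)
      (l := 𝓝[>](0:ℝ)) (F := fun t x => ‖F t x‖^(2:ℝ)) (f := fun _ => (0:ℝ))
      (fun x => (g x)^2) ?_ ?_ ?_ ?_
    · simpa using main
    · apply Eventually.of_forall
      intro t
      show AEStronglyMeasurable (fun x => ‖F t x‖^(2:ℝ)) μ
      have : (fun x => ‖F t x‖^(2:ℝ)) = fun x => ‖F t x‖ * ‖F t x‖ := by
        funext x
        rw [show (2:ℝ) = ((2:ℕ):ℝ) by norm_num, Real.rpow_natCast]
        ring
      rw [this]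
      exact (hAESM t).norm.mul (hAESM t).norm
    · filter_upwards [self_mem_nhdsWithin] with t ht
      apply ae_of_all
      intro x
      have h1 := hbound t ht x
      have h2 : (0:ℝ) ≤ ‖F t x‖ := norm_nonneg _
      rw [Real.norm_eq_abs, abs_of_nonneg (by positivity),
        show (2:ℝ) = ((2:ℕ):ℝ) by norm_num, Real.rpow_natCast]
      nlinarith
    · exact hgmem.integrable_sq
    · apply ae_of_all
      intro x
      have h1 : Tendsto (fun t => ‖F t x‖) (𝓝[>](0:ℝ)) (𝓝 0) := by
        simpa using (hlim x).norm
      have h2 : ContinuousAt (fun s : ℝ => s ^ (2:ℝ)) 0 := by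
        apply Real.continuousAt_rpow_const
        right; norm_num
      have := h2.tendsto.comp h1
      simpa [Real.zero_rpow, Function.comp_def] using this
  -- convert to eLpNorm
  have hMem : ∀ t : ℝ, 0 < t → MemLp (F t) 2 μ := by
    intro t ht
    refine hgmem.of_le (hAESM t) (ae_of_all _ fun x => ?_)
    have := hbound t ht x
    have h2 : (0:ℝ) ≤ g x := (norm_nonneg _).trans this
    rw [Real.norm_eq_abs, abs_of_nonneg h2]
    exact this
  have key : ∀ᶠ t in 𝓝[>](0:ℝ),
      eLpNorm (F t) 2 μ = ENNReal.ofReal ((∫ x, ‖F t x‖^(2:ℝ) ∂μ) ^ (2:ℝ)⁻¹) := by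
    filter_upwards [self_mem_nhdsWithin] with t ht
    have := (hMem t ht).eLpNorm_eq_integral_rpow_norm (by norm_num) (by norm_num)
    simpa using this
  have hcomp : Tendsto (fun s : ℝ => ENNReal.ofReal (s ^ (2:ℝ)⁻¹)) (𝓝 0) (𝓝 0) := by
    have h2 : ContinuousAt (fun s : ℝ => s ^ ((2:ℝ)⁻¹:ℝ)) 0 := by
      apply Real.continuousAt_rpow_const
      right; norm_num
    have h3 := (ENNReal.continuous_ofReal.tendsto _).comp h2.tendsto
    simpa [Real.zero_rpow, Function.comp_def] using h3
  have hfin := hcomp.comp hI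
  exact Tendsto.congr' (by filter_upwards [key] with t hk using hk.symm) hfin
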